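/- Let V be a real n×m matrix such that 0 lies in the interior of the convex hull of the columns of V, let A be a real n×n matrix, C a real n_z×n matrix, η_z > 0 a real number, and M a real m×m matrix whose off-diagonal entries are all nonnegative, such that A V = V M and 1ᵀM = −η_z · ẑ_V, where ẑ_V is the row vector whose j-th entry is |C V_j|₁ (V_j the j-th column of V). Then for every x ∈ ℝⁿ and every h ∈ ℝⁿ with hᵀx = ψ_V(x) and hᵀV ≤ 1ᵀ componentwise, it holds that hᵀA x ≤ −η_z · |C x|₁. -/
import Mathlib


open Matrix

/-- Polyhedral gauge `ψ_V(x) = inf {1ᵀp : p ≥ 0, Vp = x}`. -/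
noncomputable def psiV {n : ℕ} {m : Type*} [Fintype m]
    (V : Matrix (Fin n) m ℝ) (x : Fin n → ℝ) : ℝ :=
  sInf {s : ℝ | ∃ p : m → ℝ, (∀ j, 0 ≤ p j) ∧ V.mulVec p = x ∧ s = ∑ j, p j}

/-- `0` lies in the interior of the convex hull of the columns of `V`. -/
def ZeroInInterior {n : ℕ} {m : Type*} [Fintype m]
    (V : Matrix (Fin n) m ℝ) : Prop :=
  (0 : Fin n → ℝ) ∈ interior (convexHull ℝ (Set.range fun j i => V i j))

lemma exists_rep {n m : ℕ} (V : Matrix (Fin n) (Fin m) ℝ)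
    (hV : (0 : Fin n → ℝ) ∈ interior (convexHull ℝ (Set.range fun j i => V i j)))
    (x : Fin n → ℝ) : ∃ p : Fin m → ℝ, (∀ j, 0 ≤ p j) ∧ V.mulVec p = x := by
  by_cases hx0 : x = 0
  · exact ⟨0, fun j => le_rfl, by simp [hx0]⟩
  rcases Metric.mem_nhds_iff.1 (mem_interior_iff_mem_nhds.1 hV) with ⟨ε, hε, hball⟩
  have hxn : 0 < ‖x‖ := norm_pos_iff.2 hx0
  set c : ℝ := ε / (2 * ‖x‖) with hc
  have hcpos : 0 < c := div_pos hε (by positivity)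
  have hy : c • x ∈ convexHull ℝ (Set.range fun j i => V i j) := by
    apply hball
    simp only [Metric.mem_ball, dist_zero_right, norm_smul, Real.norm_eq_abs,
      abs_of_pos hcpos]
    rw [hc, div_mul_eq_mul_div]
    rw [div_lt_iff₀ (by positivity)]
    nlinarith [hxn]
  rw [convexHull_range_eq_exists_affineCombination] at hy
  obtain ⟨s, w, hw0, hw1, hcomb⟩ := hy
  rw [Finset.affineCombination_eq_linear_combination s _ w hw1] at hcomb
  refine ⟨fun j => if j ∈ s then c⁻¹ * w j else 0, ?_, ?_⟩
  · intro j
    by_cases hj : j ∈ s <;> simp [hj]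
    exact mul_nonneg (le_of_lt (inv_pos.2 hcpos)) (hw0 j hj)
  · funext i
    have := congrFun hcomb i
    simp only [Finset.sum_apply, Pi.smul_apply, smul_eq_mul] at this
    simp only [mulVec, dotProduct]
    rw [← Finset.sum_subset (Finset.subset_univ s) (by intro j _ hj; simp [hj])]
    have : ∑ j ∈ s, V i j * (if j ∈ s then c⁻¹ * w j else 0) = c⁻¹ * ∑ j ∈ s, w j * V i j := by
      rw [Finset.mul_sum]
      apply Finset.sum_congr rfl
      intro j hj; simp [hj]; ring
    rw [this]
    have h2 := congrFun hcomb i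
    simp only [Finset.sum_apply, Pi.smul_apply, smul_eq_mul, Pi.smul_apply] at h2
    rw [h2]
    field_simp

/-- State condition (9c): if `offdiag(M) ≥ 0`, `AV = VM`, `1ᵀM = −η_z ẑ_V`
(with `ẑ_V` the row vector of entries `|CV_j|₁`), then every subgradient
`h` of `ψ_V` at `x` satisfies `hᵀAx ≤ −η_z |Cx|₁`. -/
theorem psiV_state_bound {n m nz : ℕ} (V : Matrix (Fin n) (Fin m) ℝ)
    (hV : ZeroInInterior V)
    (A : Matrix (Fin n) (Fin n) ℝ) (C : Matrix (Fin nz) (Fin n) ℝ)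
    (ηz : ℝ) (hηz : 0 < ηz)
    (M : Matrix (Fin m) (Fin m) ℝ)
    (hM : ∀ a b, a ≠ b → 0 ≤ M a b)
    (hAV : A * V = V * M)
    (hsum : ∀ j, (∑ a, M a j) = -(ηz * ∑ l, |(C * V) l j|))
    (x h : Fin n → ℝ)
    (hx : h ⬝ᵥ x = psiV V x)
    (hhV : ∀ j, (∑ i, h i * V i j) ≤ 1) :
    h ⬝ᵥ A.mulVec x ≤ -(ηz * ∑ l, |C.mulVec x l|) := by
  set S : Set ℝ := {s : ℝ | ∃ p : Fin m → ℝ, (∀ j, 0 ≤ p j) ∧ V.mulVec p = x ∧ s = ∑ j, p j}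
    with hS
  have hSne : S.Nonempty := by
    obtain ⟨p, hp0, hVp⟩ := exists_rep V hV x
    exact ⟨∑ j, p j, p, hp0, hVp, rfl⟩
  have hSbdd : BddBelow S := by
    refine ⟨0, ?_⟩
    rintro s ⟨p, hp0, -, rfl⟩
    exact Finset.sum_nonneg fun j _ => hp0 j
  -- the constant k
  set k : ℝ := -(1 + ∑ a, |M a a|) with hk
  have hkneg : k ≤ -1 := by
    have : (0:ℝ) ≤ ∑ a, |M a a| := Finset.sum_nonneg fun a _ => abs_nonneg _
    simp [hk]; linarith
  have hkdiag : ∀ a, k ≤ M a a := by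
    intro a
    have h1 : |M a a| ≤ ∑ b, |M b b| :=
      Finset.single_le_sum (fun b _ => abs_nonneg (M b b)) (Finset.mem_univ a)
    have h2 : -|M a a| ≤ M a a := neg_abs_le _
    simp only [hk]; linarith
  refine le_of_forall_pos_le_add ?_
  intro ε hε
  have hnk : 0 < -k := by linarith
  set δ : ℝ := ε / (-k) with hδ
  have hδpos : 0 < δ := div_pos hε hnk
  obtain ⟨s, hsS, hslt⟩ := Real.lt_sInf_add_pos hSne hδpos
  obtain ⟨p, hp0, hVp, rfl⟩ := hsS
  have hpsix : h ⬝ᵥ x ≤ ∑ j, p j := by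
    rw [hx, psiV]
    exact csInf_le hSbdd ⟨p, hp0, hVp, rfl⟩
  have hplt : ∑ j, p j < h ⬝ᵥ x + δ := by
    rw [hx, psiV]; exact hslt
  -- notation
  set g : Fin m → ℝ := fun j => ∑ i, h i * V i j with hg
  -- h ⬝ᵥ V.mulVec q = ∑ j, g j * q j
  have key : ∀ q : Fin m → ℝ, h ⬝ᵥ V.mulVec q = ∑ j, g j * q j := by
    intro q
    simp only [dotProduct, mulVec, hg, Finset.mul_sum]
    rw [Finset.sum_comm]
    apply Finset.sum_congr rfl
    intro j _
    rw [Finset.sum_mul]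
    apply Finset.sum_congr rfl
    intro i _; ring
  have hgp : ∑ j, g j * p j = h ⬝ᵥ x := by rw [← key, hVp]
  -- rewrite LHS
  have hLHS : h ⬝ᵥ A.mulVec x = ∑ j, g j * (M.mulVec p) j := by
    rw [← hVp, mulVec_mulVec, hAV, ← mulVec_mulVec, key]
  -- decomposition of M.mulVec p
  have hdecomp : ∀ j, (M.mulVec p) j =
      (∑ a, (M j a - if j = a then k else 0) * p a) + k * p j := by
    intro j
    simp only [mulVec, dotProduct, sub_mul, Finset.sum_sub_distrib]
    have : ∑ a, (if j = a then k else 0) * p a = k * p j := by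
      rw [Finset.sum_eq_single j] <;> simp +contextual [eq_comm]
    rw [this]; ring
  have hQ : ∀ j a, 0 ≤ (M j a - if j = a then k else 0) * p a := by
    intro j a
    apply mul_nonneg _ (hp0 a)
    by_cases hja : j = a
    · subst hja; simpa using sub_nonneg.2 (hkdiag j)
    · simpa [hja] using hM j a hja
  set r : Fin m → ℝ := fun j => ∑ a, (M j a - if j = a then k else 0) * p a with hr
  have hr0 : ∀ j, 0 ≤ r j := fun j => Finset.sum_nonneg fun a _ => hQ j a
  -- main inequality
  have step1 : ∑ j, g j * (M.mulVec p) j ≤ (∑ j, r j) + k * (h ⬝ᵥ x) := by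
    have : ∑ j, g j * (M.mulVec p) j = (∑ j, g j * r j) + k * ∑ j, g j * p j := by
      simp only [hdecomp]
      rw [Finset.mul_sum, ← Finset.sum_add_distrib]
      apply Finset.sum_congr rfl
      intro j _; simp only [hr]; ring
    rw [this, hgp]
    have : ∑ j, g j * r j ≤ ∑ j, r j := by
      apply Finset.sum_le_sum
      intro j _
      calc g j * r j ≤ 1 * r j := mul_le_mul_of_nonneg_right (hhV j) (hr0 j)
      _ = r j := one_mul _
    linarith
  -- sum of r
  have hrsum : ∑ j, r j = -(ηz * ∑ a, (∑ l, |(C * V) l a|) * p a) - k * ∑ j, p j := by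
    have h1 : ∑ j, r j = (∑ j, (M.mulVec p) j) - k * ∑ j, p j := by
      simp only [hdecomp, Finset.sum_add_distrib, Finset.mul_sum]
      ring
    have h2 : ∑ j, (M.mulVec p) j = ∑ a, (∑ j, M j a) * p a := by
      simp only [mulVec, dotProduct]
      rw [Finset.sum_comm]
      apply Finset.sum_congr rfl
      intro a _; rw [Finset.sum_mul]
    rw [h1, h2]
    have h3 : ∑ a, (∑ j, M j a) * p a = -(ηz * ∑ a, (∑ l, |(C * V) l a|) * p a) := by
      rw [Finset.mul_sum, ← Finset.sum_neg_distrib]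
      apply Finset.sum_congr rfl
      intro a _
      rw [hsum a]; ring
    rw [h3]
  -- triangle inequality
  have htri : ∑ l, |C.mulVec x l| ≤ ∑ a, (∑ l, |(C * V) l a|) * p a := by
    have hCx : ∀ l, C.mulVec x l = ∑ a, (C * V) l a * p a := by
      intro l
      rw [← hVp, mulVec_mulVec]
      simp [mulVec, dotProduct]
    calc ∑ l, |C.mulVec x l| ≤ ∑ l, ∑ a, |(C * V) l a| * p a := by
          apply Finset.sum_le_sum
          intro l _
          rw [hCx l]
          calc |∑ a, (C * V) l a * p a| ≤ ∑ a, |(C * V) l a * p a| :=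
                Finset.abs_sum_le_sum_abs _ _
          _ = ∑ a, |(C * V) l a| * p a := by
                apply Finset.sum_congr rfl
                intro a _
                rw [abs_mul, abs_of_nonneg (hp0 a)]
      _ = ∑ a, (∑ l, |(C * V) l a|) * p a := by
          rw [Finset.sum_comm]
          apply Finset.sum_congr rfl
          intro a _; rw [Finset.sum_mul]
  -- combine
  have hkterm : k * (h ⬝ᵥ x - ∑ j, p j) ≤ ε := by
    have h1 : h ⬝ᵥ x - ∑ j, p j ≤ 0 := by linarith
    have h2 : -δ ≤ h ⬝ᵥ x - ∑ j, p j := by linarith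
    have : k * (h ⬝ᵥ x - ∑ j, p j) ≤ k * (-δ) :=
      mul_le_mul_of_nonpos_left h2 (by linarith)
    have hk0 : k ≠ 0 := by intro h0; rw [h0] at hkneg; linarith
    have hkd : k * (-δ) = ε := by
      rw [hδ]
      field_simp
    linarith
  have hfin : -(ηz * ∑ a, (∑ l, |(C * V) l a|) * p a) ≤ -(ηz * ∑ l, |C.mulVec x l|) := by
    have := mul_le_mul_of_nonneg_left htri (le_of_lt hηz)
    linarith
  calc h ⬝ᵥ A.mulVec x = ∑ j, g j * (M.mulVec p) j := hLHS
    _ ≤ (∑ j, r j) + k * (h ⬝ᵥ x) := step1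
    _ = -(ηz * ∑ a, (∑ l, |(C * V) l a|) * p a) + k * (h ⬝ᵥ x - ∑ j, p j) := by
        rw [hrsum]; ring
    _ ≤ -(ηz * ∑ l, |C.mulVec x l|) + ε := by linarith
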